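/- Let M, N be positive natural numbers and let d be a dataset of N instances with M binary protected attributes and a binary label. Suppose every vertex (level-0 hypercube) contains at least one instance, and suppose at least one instance has label true. Then the worst-case disparate impact DI(K) = SR_min(K)/SR_max(K) is monotonically increasing in the level K: for every K with 1 ≤ K ≤ M, DI(K-1) ≤ DI(K). -/

import Mathlib

/-- An attribute vector `v` belongs to the hypercube `x` if it matches all specified coordinates. -/
def Belongs {M : ℕ} (x : Fin M → Option Bool) (v : Fin M → Bool) : Prop :=
  ∀ i : Fin M, ∀ b : Bool, x i = some b → v i = b

instance {M : ℕ} (x : Fin M → Option Bool) (v : Fin M → Bool) : Decidable (Belongs x v) := by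
  unfold Belongs; infer_instance

/-- The level of a hypercube: the number of its stars (unspecified coordinates). -/
def level {M : ℕ} (x : Fin M → Option Bool) : ℕ :=
  (Finset.univ.filter fun i => x i = none).card

/-- `cnt d x` = N(x): the number of instances of the dataset `d` belonging to `x`. -/
def cnt {M N : ℕ} (d : Fin N → (Fin M → Bool) × Bool) (x : Fin M → Option Bool) : ℕ :=
  (Finset.univ.filter fun n => Belongs x (d n).1).card

/-- `cnt1 d x` = N¹(x): the number of instances belonging to `x` with label `true`. -/
def cnt1 {M N : ℕ} (d : Fin N → (Fin M → Bool) × Bool) (x : Fin M → Option Bool) : ℕ :=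
  (Finset.univ.filter fun n => Belongs x (d n).1 ∧ (d n).2 = true).card

/-- The success rate SR(x) = N¹(x)/N(x). -/
def SR {M N : ℕ} (d : Fin N → (Fin M → Bool) × Bool) (x : Fin M → Option Bool) : ℚ :=
  (cnt1 d x : ℚ) / (cnt d x : ℚ)

/-- The finset of all hypercubes of level `K`. -/
def levelSet (M K : ℕ) : Finset (Fin M → Option Bool) :=
  Finset.univ.filter fun x => level x = K

/-- SR_min(K): minimum success rate over all hypercubes of level `K`
(the level set is nonempty whenever `K ≤ M`, so the junk value `0` is never used there). -/
def SRmin {M N : ℕ} (d : Fin N → (Fin M → Bool) × Bool) (K : ℕ) : ℚ :=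
  WithTop.untopD 0 (((levelSet M K).image (SR d)).min)

/-- SR_max(K): maximum success rate over all hypercubes of level `K`. -/
def SRmax {M N : ℕ} (d : Fin N → (Fin M → Bool) × Bool) (K : ℕ) : ℚ :=
  WithBot.unbotD 0 (((levelSet M K).image (SR d)).max)

/-- The worst-case disparate impact at level K. -/
def DI {M N : ℕ} (d : Fin N → (Fin M → Bool) × Bool) (K : ℕ) : ℚ :=
  SRmin d K / SRmax d K

section Aux
variable {M N : ℕ}

lemma belongs_update {x : Fin M → Option Bool} {i : Fin M} (hi : x i = none)
    (b : Bool) (w : Fin M → Bool) :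
    Belongs (Function.update x i (some b)) w ↔ Belongs x w ∧ w i = b := by
  constructor
  · intro h
    refine ⟨fun j c hj => ?_, h i b (by simp)⟩
    by_cases hji : j = i
    · subst hji; rw [hi] at hj; cases hj
    · exact h j c (by simp [Function.update_apply, hji, hj])
  · rintro ⟨h, hb⟩ j c hj
    by_cases hji : j = i
    · subst hji; simp [Function.update_apply] at hj; subst hj; exact hb
    · exact h j c (by simpa [Function.update_apply, hji] using hj)

lemma cnt_split (d : Fin N → (Fin M → Bool) × Bool) (x : Fin M → Option Bool)
    (i : Fin M) (hi : x i = none) :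
    cnt d x = cnt d (Function.update x i (some false)) + cnt d (Function.update x i (some true)) := by
  unfold cnt
  rw [← Finset.card_union_of_disjoint]
  · congr 1
    ext n
    simp only [Finset.mem_union, Finset.mem_filter, Finset.mem_univ, true_and,
      belongs_update hi]
    cases h : (d n).1 i <;> tauto
  · rw [Finset.disjoint_left]
    intro n h1 h2
    simp only [Finset.mem_filter, belongs_update hi] at h1 h2
    rw [h1.2.2] at h2
    exact Bool.noConfusion h2.2.2

lemma cnt1_split (d : Fin N → (Fin M → Bool) × Bool) (x : Fin M → Option Bool)
    (i : Fin M) (hi : x i = none) :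
    cnt1 d x = cnt1 d (Function.update x i (some false)) + cnt1 d (Function.update x i (some true)) := by
  unfold cnt1
  rw [← Finset.card_union_of_disjoint]
  · congr 1
    ext n
    simp only [Finset.mem_union, Finset.mem_filter, Finset.mem_univ, true_and,
      belongs_update hi]
    cases h : (d n).1 i <;> tauto
  · rw [Finset.disjoint_left]
    intro n h1 h2
    simp only [Finset.mem_filter, belongs_update hi] at h1 h2
    rw [h1.2.1.2] at h2
    exact Bool.noConfusion h2.2.1.2

lemma level_update {x : Fin M → Option Bool} {i : Fin M} (hi : x i = none) (b : Bool) :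
    level (Function.update x i (some b)) = level x - 1 := by
  unfold level
  have h : Finset.univ.filter (fun j => Function.update x i (some b) j = none)
      = (Finset.univ.filter fun j => x j = none).erase i := by
    ext j
    by_cases hji : j = i <;> simp [Function.update_apply, hji, hi]
  rw [h, Finset.card_erase_of_mem (by simp [hi])]

lemma cnt_mono (d : Fin N → (Fin M → Bool) × Bool) {x y : Fin M → Option Bool}
    (h : ∀ w, Belongs x w → Belongs y w) : cnt d x ≤ cnt d y := by
  apply Finset.card_le_card
  intro n hn
  simp only [Finset.mem_filter, Finset.mem_univ, true_and] at *
  exact h _ hn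

lemma cnt_pos_of (d : Fin N → (Fin M → Bool) × Bool)
    (hvert : ∀ v : Fin M → Bool, 0 < cnt d (fun i => some (v i)))
    (x : Fin M → Option Bool) : 0 < cnt d x := by
  refine lt_of_lt_of_le (hvert (fun i => (x i).getD false)) (cnt_mono d ?_)
  intro w hw i b hib
  have h := hw i ((x i).getD false) rfl
  rw [hib] at h
  simpa using h

lemma SR_nonneg (d : Fin N → (Fin M → Bool) × Bool) (x : Fin M → Option Bool) :
    0 ≤ SR d x := by
  unfold SR; positivity

lemma mediant_ge {a0 a1 b0 b1 m : ℚ} (hb0 : 0 < b0) (hb1 : 0 < b1)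
    (h0 : m ≤ a0 / b0) (h1 : m ≤ a1 / b1) : m ≤ (a0 + a1) / (b0 + b1) := by
  rw [le_div_iff₀ (by linarith)]
  rw [le_div_iff₀ hb0] at h0
  rw [le_div_iff₀ hb1] at h1
  linarith

lemma mediant_le {a0 a1 b0 b1 m : ℚ} (hb0 : 0 < b0) (hb1 : 0 < b1)
    (h0 : a0 / b0 ≤ m) (h1 : a1 / b1 ≤ m) : (a0 + a1) / (b0 + b1) ≤ m := by
  rw [div_le_iff₀ (by linarith)]
  rw [div_le_iff₀ hb0] at h0
  rw [div_le_iff₀ hb1] at h1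
  linarith

lemma exists_level_belongs (K : ℕ) (hK : K ≤ M) (v : Fin M → Bool) :
    ∃ x : Fin M → Option Bool, level x = K ∧ Belongs x v := by
  obtain ⟨t, -, ht⟩ := Finset.exists_subset_card_eq
    (s := (Finset.univ : Finset (Fin M))) (n := K) (by simpa using hK)
  refine ⟨fun i => if i ∈ t then none else some (v i), ?_, ?_⟩
  · unfold level
    have he : Finset.univ.filter
        (fun i => (if i ∈ t then none else some (v i)) = none) = t := by
      ext i
      by_cases h : i ∈ t <;> simp [h]
    rw [he, ht]
  · intro i b hib
    by_cases h : i ∈ t <;> simp [h] at hib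
    exact hib

lemma levelSet_nonempty (K : ℕ) (hK : K ≤ M) : (levelSet M K).Nonempty := by
  obtain ⟨x, hx, -⟩ := exists_level_belongs K hK (fun _ => false)
  exact ⟨x, by simp [levelSet, hx]⟩

lemma SRmin_eq (d : Fin N → (Fin M → Bool) × Bool) (K : ℕ) (h : (levelSet M K).Nonempty) :
    SRmin d K = ((levelSet M K).image (SR d)).min' (h.image _) := by
  unfold SRmin
  rw [← Finset.coe_min' (h.image _)]
  rfl

lemma SRmax_eq (d : Fin N → (Fin M → Bool) × Bool) (K : ℕ) (h : (levelSet M K).Nonempty) :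
    SRmax d K = ((levelSet M K).image (SR d)).max' (h.image _) := by
  unfold SRmax
  rw [← Finset.coe_max' (h.image _)]
  rfl

lemma SRmin_le (d : Fin N → (Fin M → Bool) × Bool) {K : ℕ} (hK : K ≤ M)
    {x : Fin M → Option Bool} (hx : level x = K) : SRmin d K ≤ SR d x := by
  rw [SRmin_eq d K (levelSet_nonempty K hK)]
  exact Finset.min'_le _ _ (Finset.mem_image_of_mem _ (by simp [levelSet, hx]))

lemma le_SRmax (d : Fin N → (Fin M → Bool) × Bool) {K : ℕ} (hK : K ≤ M)
    {x : Fin M → Option Bool} (hx : level x = K) : SR d x ≤ SRmax d K := by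
  rw [SRmax_eq d K (levelSet_nonempty K hK)]
  exact Finset.le_max' _ _ (Finset.mem_image_of_mem _ (by simp [levelSet, hx]))

lemma exists_SRmin (d : Fin N → (Fin M → Bool) × Bool) {K : ℕ} (hK : K ≤ M) :
    ∃ x : Fin M → Option Bool, level x = K ∧ SR d x = SRmin d K := by
  have h := levelSet_nonempty (M := M) K hK
  rw [SRmin_eq d K h]
  obtain ⟨x, hx, hSR⟩ := Finset.mem_image.mp (Finset.min'_mem _ (h.image (SR d)))
  exact ⟨x, by simpa [levelSet] using hx, hSR⟩

lemma exists_SRmax (d : Fin N → (Fin M → Bool) × Bool) {K : ℕ} (hK : K ≤ M) :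
    ∃ x : Fin M → Option Bool, level x = K ∧ SR d x = SRmax d K := by
  have h := levelSet_nonempty (M := M) K hK
  rw [SRmax_eq d K h]
  obtain ⟨x, hx, hSR⟩ := Finset.mem_image.mp (Finset.max'_mem _ (h.image (SR d)))
  exact ⟨x, by simpa [levelSet] using hx, hSR⟩

end Aux

/-- If every vertex contains at least one instance and at least one instance
has label true, the worst-case disparate impact is monotonically increasing in the level. -/
theorem DI_mono (M N : ℕ) (hM : 0 < M) (hN : 0 < N)
    (d : Fin N → (Fin M → Bool) × Bool)
    (hvert : ∀ v : Fin M → Bool, 0 < cnt d (fun i => some (v i)))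
    (hpos : ∃ n : Fin N, (d n).2 = true)
    (K : ℕ) (hK1 : 1 ≤ K) (hKM : K ≤ M) :
    DI d (K - 1) ≤ DI d K := by
  have hcnt : ∀ x : Fin M → Option Bool, 0 < cnt d x := cnt_pos_of d hvert
  have hcntQ : ∀ x : Fin M → Option Bool, (0:ℚ) < (cnt d x : ℚ) := fun x => by
    exact_mod_cast hcnt x
  have hK1M : K - 1 ≤ M := le_trans (Nat.sub_le K 1) hKM
  -- splitting lemmas for SR
  have SR_ge_split : ∀ (x : Fin M → Option Bool) (i : Fin M), x i = none → ∀ m : ℚ,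
      m ≤ SR d (Function.update x i (some false)) →
      m ≤ SR d (Function.update x i (some true)) → m ≤ SR d x := by
    intro x i hi m h0 h1
    unfold SR at *
    rw [cnt_split d x i hi, cnt1_split d x i hi]
    push_cast
    exact mediant_ge (hcntQ _) (hcntQ _) h0 h1
  have SR_le_split : ∀ (x : Fin M → Option Bool) (i : Fin M), x i = none → ∀ m : ℚ,
      SR d (Function.update x i (some false)) ≤ m →
      SR d (Function.update x i (some true)) ≤ m → SR d x ≤ m := by
    intro x i hi m h0 h1
    unfold SR at *
    rw [cnt_split d x i hi, cnt1_split d x i hi]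
    push_cast
    exact mediant_le (hcntQ _) (hcntQ _) h0 h1
  -- helper: a level-K hypercube has a star
  have star : ∀ x : Fin M → Option Bool, level x = K → ∃ i : Fin M, x i = none := by
    intro x hx
    have : 0 < (Finset.univ.filter fun i => x i = none).card := by
      unfold level at hx; omega
    obtain ⟨i, hi⟩ := Finset.card_pos.mp this
    exact ⟨i, (Finset.mem_filter.mp hi).2⟩
  -- SRmin (K-1) ≤ SRmin K
  have hmin : SRmin d (K - 1) ≤ SRmin d K := by
    obtain ⟨x, hlx, hSRx⟩ := exists_SRmin d hKM
    obtain ⟨i, hi⟩ := star x hlx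
    rw [← hSRx]
    refine SR_ge_split x i hi _ ?_ ?_ <;>
      exact SRmin_le d hK1M (by rw [level_update hi, hlx])
  -- SRmax K ≤ SRmax (K-1)
  have hmax : SRmax d K ≤ SRmax d (K - 1) := by
    obtain ⟨x, hlx, hSRx⟩ := exists_SRmax d hKM
    obtain ⟨i, hi⟩ := star x hlx
    rw [← hSRx]
    refine SR_le_split x i hi _ ?_ ?_ <;>
      exact le_SRmax d hK1M (by rw [level_update hi, hlx])
  -- 0 < SRmax K
  have hMK : 0 < SRmax d K := by
    obtain ⟨n, hn⟩ := hpos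
    obtain ⟨x, hlx, hbx⟩ := exists_level_belongs K hKM (d n).1
    refine lt_of_lt_of_le ?_ (le_SRmax d hKM hlx)
    unfold SR
    apply div_pos _ (hcntQ x)
    have : 0 < cnt1 d x := by
      apply Finset.card_pos.mpr
      exact ⟨n, by simp [hbx, hn]⟩
    exact_mod_cast this
  -- 0 ≤ SRmin K
  have hmK : 0 ≤ SRmin d K := by
    obtain ⟨x, -, hSRx⟩ := exists_SRmin d hKM
    rw [← hSRx]
    exact SR_nonneg d x
  unfold DI
  exact div_le_div₀ hmK hmin hMK hmax
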